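/- For every integer k ≥ 2 and every positive integer i, writing s(i) = Σ_{a ∈ iΔ_k ∩ ℤ²} a for the sum of lattice points in iΔ_k and E(i) = #(iΔ_k ∩ ℤ²), one has vol(Δ_k)·s(i) − i·E(i)·∫_{Δ_k} x dv = (i(i+1)k(k−1)/24)·(k−1, −2), which is nonzero. In particular the Chow-semistability obstruction is nonvanishing for the Hirzebruch surfaces. -/

import Mathlib

open MeasureTheory Pointwise

/-- The Delzant polygon of the (k-1)-st Hirzebruch surface. -/
noncomputable def deltaK (k : ℤ) : Set (ℝ × ℝ) :=
  convexHull ℝ ({(0, 0), (0, 1), (1, 1), ((k : ℝ), 0)} : Set (ℝ × ℝ))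

/-- The lattice points of a subset of `ℝ × ℝ`. -/
def latPts (S : Set (ℝ × ℝ)) : Set (ℤ × ℤ) :=
  {p | ((p.1 : ℝ), (p.2 : ℝ)) ∈ S}

/-- The sum of the lattice points contained in a subset of `ℝ × ℝ`. -/
noncomputable def latSum (S : Set (ℝ × ℝ)) : ℝ × ℝ :=
  ∑ᶠ p ∈ latPts S, (((p.1 : ℝ), (p.2 : ℝ)) : ℝ × ℝ)

/-! ### Halfplane description of `deltaK` -/

lemma convex_hp (k : ℝ) :
    Convex ℝ {p : ℝ × ℝ | 0 ≤ p.1 ∧ 0 ≤ p.2 ∧ p.2 ≤ 1 ∧ p.1 + (k - 1) * p.2 ≤ k} := by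
  rintro p ⟨h1, h2, h3, h4⟩ q ⟨g1, g2, g3, g4⟩ a b ha hb hab
  have e1 : (a • p + b • q).1 = a * p.1 + b * q.1 := rfl
  have e2 : (a • p + b • q).2 = a * p.2 + b * q.2 := rfl
  have habk : a * k + b * k = k := by rw [← add_mul, hab, one_mul]
  refine ⟨?_, ?_, ?_, ?_⟩ <;> simp only [e1, e2] <;>
    nlinarith [mul_le_mul_of_nonneg_left h4 ha, mul_le_mul_of_nonneg_left g4 hb, habk]

lemma deltaK_eq (k : ℤ) (hk : 2 ≤ k) :
    deltaK k = {p : ℝ × ℝ | 0 ≤ p.1 ∧ 0 ≤ p.2 ∧ p.2 ≤ 1 ∧ p.1 + ((k : ℝ) - 1) * p.2 ≤ k} := by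
  have hk' : (2 : ℝ) ≤ (k : ℝ) := by exact_mod_cast hk
  have hk0 : (0 : ℝ) < (k : ℝ) := by linarith
  apply subset_antisymm
  · apply convexHull_min _ (convex_hp (k : ℝ))
    rintro p (rfl | rfl | rfl | rfl) <;> refine ⟨?_, ?_, ?_, ?_⟩ <;> simp <;> linarith
  · rintro ⟨x, y⟩ ⟨hx, hy0, hy1, hxy⟩
    simp only [Set.mem_setOf_eq] at *
    have hconv : Convex ℝ (deltaK k) := convex_convexHull ℝ _
    have hv : ∀ v ∈ ({(0, 0), (0, 1), (1, 1), ((k : ℝ), 0)} : Set (ℝ × ℝ)), v ∈ deltaK k :=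
      fun v hv => subset_convexHull ℝ _ hv
    rcases le_total (x - k + k * y) 0 with ht | ht
    · have hxk : x / k ≤ 1 - y := by
        rw [div_le_iff₀ hk0]; nlinarith
      have hmem := hconv.sum_mem (t := (Finset.univ : Finset (Fin 4)))
        (w := ![1 - y - x / k, y, 0, x / k])
        (z := ![((0 : ℝ), (0 : ℝ)), (0, 1), (1, 1), ((k : ℝ), 0)])
        (fun j _ => by
          fin_cases j <;> simp <;> first | linarith | positivity)
        (by simp [Fin.sum_univ_four]; ring)
        (fun j _ => by fin_cases j <;> apply hv <;> simp)
      convert hmem using 1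
      simp only [Fin.sum_univ_four, Matrix.cons_val_zero, Matrix.cons_val_one, Matrix.head_cons,
        Prod.smul_mk, smul_eq_mul, Prod.mk_add_mk]
      refine Prod.ext ?_ ?_ <;> simp <;> field_simp
    · have hmem := hconv.sum_mem (t := (Finset.univ : Finset (Fin 4)))
        (w := ![0, k - x - (k - 1) * y, x - k + k * y, 1 - y])
        (z := ![((0 : ℝ), (0 : ℝ)), (0, 1), (1, 1), ((k : ℝ), 0)])
        (fun j _ => by fin_cases j <;> simp <;> linarith)
        (by simp [Fin.sum_univ_four]; ring)
        (fun j _ => by fin_cases j <;> apply hv <;> simp)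
      convert hmem using 1
      simp only [Fin.sum_univ_four, Matrix.cons_val_zero, Matrix.cons_val_one, Matrix.head_cons,
        Prod.smul_mk, smul_eq_mul, Prod.mk_add_mk]
      refine Prod.ext ?_ ?_ <;> simp <;> ring

lemma smul_deltaK_eq (k : ℤ) (hk : 2 ≤ k) (i : ℕ) (hi : 1 ≤ i) :
    (i : ℝ) • deltaK k =
      {p : ℝ × ℝ | 0 ≤ p.1 ∧ 0 ≤ p.2 ∧ p.2 ≤ (i : ℝ) ∧
        p.1 + ((k : ℝ) - 1) * p.2 ≤ (i : ℝ) * k} := by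
  have hi' : (0 : ℝ) < (i : ℝ) := by exact_mod_cast Nat.lt_of_lt_of_le Nat.zero_lt_one hi
  have hk' : (2 : ℝ) ≤ (k : ℝ) := by exact_mod_cast hk
  rw [deltaK_eq k hk]
  ext p
  constructor
  · rintro ⟨q, ⟨h1, h2, h3, h4⟩, rfl⟩
    have e1 : ((i : ℝ) • q).1 = i * q.1 := rfl
    have e2 : ((i : ℝ) • q).2 = i * q.2 := rfl
    refine ⟨?_, ?_, ?_, ?_⟩ <;> simp only [Set.mem_setOf_eq, e1, e2] <;> nlinarith
  · rintro ⟨h1, h2, h3, h4⟩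
    refine ⟨(p.1 / i, p.2 / i), ⟨?_, ?_, ?_, ?_⟩, ?_⟩
    · positivity
    · positivity
    · simp only [Set.mem_setOf_eq]
      rw [div_le_one hi']; linarith
    · show p.1 / i + ((k : ℝ) - 1) * (p.2 / i) ≤ k
      have : p.1 / i + ((k : ℝ) - 1) * (p.2 / i) = (p.1 + ((k : ℝ) - 1) * p.2) / i := by ring
      rw [this, div_le_iff₀ hi']; linarith
    · refine Prod.ext ?_ ?_ <;> simp [smul_eq_mul] <;> field_simp

/-! ### Lattice points as a Finset -/

noncomputable def latF (i : ℕ) (k : ℤ) : Finset (ℤ × ℤ) :=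
  (Finset.Icc 0 (i : ℤ)).biUnion fun y =>
    (Finset.Icc 0 ((i : ℤ) * k - (k - 1) * y)).image fun x => (x, y)

lemma mem_latF {i : ℕ} {k : ℤ} {p : ℤ × ℤ} :
    p ∈ latF i k ↔ 0 ≤ p.1 ∧ 0 ≤ p.2 ∧ p.2 ≤ (i : ℤ) ∧ p.1 + (k - 1) * p.2 ≤ (i : ℤ) * k := by
  obtain ⟨x, y⟩ := p
  simp only [latF, Finset.mem_biUnion, Finset.mem_image, Finset.mem_Icc]
  constructor
  · rintro ⟨y', ⟨hy1, hy2⟩, x', ⟨hx1, hx2⟩, h⟩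
    obtain ⟨rfl, rfl⟩ := Prod.mk.injEq .. ▸ h
    exact ⟨hx1, hy1, hy2, by linarith⟩
  · rintro ⟨h1, h2, h3, h4⟩
    exact ⟨y, ⟨h2, h3⟩, x, ⟨h1, by linarith⟩, rfl⟩

lemma latPts_smul_eq (k : ℤ) (hk : 2 ≤ k) (i : ℕ) (hi : 1 ≤ i) :
    latPts ((i : ℝ) • deltaK k) = ↑(latF i k) := by
  ext p
  rw [latPts, Set.mem_setOf_eq, smul_deltaK_eq k hk i hi, Finset.mem_coe, mem_latF]
  have e1 : (((p.1 : ℝ), (p.2 : ℝ)) : ℝ × ℝ).1 = (p.1 : ℝ) := rfl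
  have e2 : (((p.1 : ℝ), (p.2 : ℝ)) : ℝ × ℝ).2 = (p.2 : ℝ) := rfl
  rw [Set.mem_setOf_eq, e1, e2]
  constructor
  · rintro ⟨h1, h2, h3, h4⟩
    refine ⟨by exact_mod_cast h1, by exact_mod_cast h2, by exact_mod_cast h3, ?_⟩
    have : ((p.1 + (k - 1) * p.2 : ℤ) : ℝ) ≤ (((i : ℤ) * k : ℤ) : ℝ) := by
      push_cast; push_cast at h4; linarith
    exact_mod_cast this
  · rintro ⟨h1, h2, h3, h4⟩
    refine ⟨by exact_mod_cast h1, by exact_mod_cast h2, by exact_mod_cast h3, ?_⟩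
    have : ((p.1 + (k - 1) * p.2 : ℤ) : ℝ) ≤ (((i : ℤ) * k : ℤ) : ℝ) := by exact_mod_cast h4
    push_cast at this ⊢; linarith

/-! ### Sum formulas -/

lemma Icc_int_eq (n : ℕ) :
    Finset.Icc (0 : ℤ) (n : ℤ) = (Finset.range (n + 1)).image (fun j : ℕ => (j : ℤ)) := by
  ext a
  simp only [Finset.mem_Icc, Finset.mem_image, Finset.mem_range]
  constructor
  · rintro ⟨h1, h2⟩; exact ⟨a.toNat, by omega, by omega⟩
  · rintro ⟨j, hj, rfl⟩; omega

lemma sum_Icc_int (m : ℤ) (hm : 0 ≤ m) (f : ℤ → ℝ) :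
    ∑ x ∈ Finset.Icc (0 : ℤ) m, f x = ∑ j ∈ Finset.range (m.toNat + 1), f (j : ℤ) := by
  lift m to ℕ using hm with n
  rw [Icc_int_eq, Finset.sum_image (fun a _ b _ h => by exact_mod_cast h), Int.toNat_natCast]

lemma sum_range_cast (n : ℕ) : ∑ j ∈ Finset.range (n + 1), (j : ℝ) = n * (n + 1) / 2 := by
  induction n with
  | zero => simp
  | succ n ih => rw [Finset.sum_range_succ, ih]; push_cast; ring

lemma card_Icc_real (m : ℤ) (hm : 0 ≤ m) :
    ((Finset.Icc (0 : ℤ) m).card : ℝ) = (m : ℝ) + 1 := by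
  rw [Int.card_Icc]
  have h : m + 1 - 0 = m + 1 := by ring
  rw [h]
  have := Int.toNat_of_nonneg (by omega : (0 : ℤ) ≤ m + 1)
  exact_mod_cast congrArg (fun z : ℤ => (z : ℝ)) this

lemma sum_Icc_id_real (m : ℤ) (hm : 0 ≤ m) :
    ∑ x ∈ Finset.Icc (0 : ℤ) m, (x : ℝ) = (m : ℝ) * ((m : ℝ) + 1) / 2 := by
  rw [sum_Icc_int m hm]
  have hcast : ((m.toNat : ℕ) : ℝ) = (m : ℝ) := by exact_mod_cast Int.toNat_of_nonneg hm
  calc ∑ j ∈ Finset.range (m.toNat + 1), ((j : ℤ) : ℝ)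
      = ∑ j ∈ Finset.range (m.toNat + 1), (j : ℝ) := by push_cast; rfl
    _ = m.toNat * ((m.toNat : ℝ) + 1) / 2 := sum_range_cast _
    _ = (m : ℝ) * ((m : ℝ) + 1) / 2 := by rw [hcast]

lemma sum_quad (n : ℕ) (a b c : ℝ) :
    ∑ j ∈ Finset.range (n + 1), (a * (j : ℝ) ^ 2 + b * (j : ℝ) + c) =
      a * ((n : ℝ) * (n + 1) * (2 * n + 1) / 6) + b * ((n : ℝ) * (n + 1) / 2) + c * (n + 1) := by
  induction n with
  | zero => simp
  | succ n ih => rw [Finset.sum_range_succ, ih]; push_cast; ring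

/-! ### Sums over the lattice Finset -/

lemma sum_latF (i : ℕ) (k : ℤ) (f : ℤ × ℤ → ℝ) :
    ∑ p ∈ latF i k, f p =
      ∑ y ∈ Finset.Icc (0 : ℤ) (i : ℤ), ∑ x ∈ Finset.Icc 0 ((i : ℤ) * k - (k - 1) * y), f (x, y) := by
  rw [latF, Finset.sum_biUnion]
  · refine Finset.sum_congr rfl fun y _ => ?_
    rw [Finset.sum_image]
    intro a _ b _ h
    exact (Prod.mk.injEq .. ▸ h).1
  · intro y1 h1 y2 h2 hne
    simp only [Finset.disjoint_left, Finset.mem_image]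
    rintro p ⟨x1, _, rfl⟩ ⟨x2, _, h⟩
    exact hne (Prod.mk.injEq .. ▸ h).2.symm

/-! ### Volume and integral over `deltaK` via Fubini -/

def Tset (k : ℤ) : Set (ℝ × ℝ) :=
  {p : ℝ × ℝ | p.1 ∈ Set.Icc (0 : ℝ) 1 ∧ p.2 ∈ Set.Icc 0 ((k : ℝ) - ((k : ℝ) - 1) * p.1)}

lemma isClosed_Tset (k : ℤ) : IsClosed (Tset k) := by
  have h1 : IsClosed {p : ℝ × ℝ | 0 ≤ p.1} := isClosed_le continuous_const continuous_fst
  have h2 : IsClosed {p : ℝ × ℝ | p.1 ≤ 1} := isClosed_le continuous_fst continuous_const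
  have h3 : IsClosed {p : ℝ × ℝ | 0 ≤ p.2} := isClosed_le continuous_const continuous_snd
  have h4 : IsClosed {p : ℝ × ℝ | p.2 ≤ (k : ℝ) - ((k : ℝ) - 1) * p.1} :=
    isClosed_le continuous_snd (by continuity)
  have : Tset k = ({p : ℝ × ℝ | 0 ≤ p.1} ∩ {p | p.1 ≤ 1}) ∩
      ({p | 0 ≤ p.2} ∩ {p | p.2 ≤ (k : ℝ) - ((k : ℝ) - 1) * p.1}) := by
    ext p
    constructor
    · rintro ⟨⟨h1, h2⟩, h3, h4⟩; exact ⟨⟨h1, h2⟩, h3, h4⟩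
    · rintro ⟨⟨h1, h2⟩, h3, h4⟩; exact ⟨⟨h1, h2⟩, h3, h4⟩
  rw [this]
  exact ((h1.inter h2).inter (h3.inter h4))

lemma isCompact_Tset (k : ℤ) (hk : 2 ≤ k) : IsCompact (Tset k) := by
  have hk' : (2 : ℝ) ≤ (k : ℝ) := by exact_mod_cast hk
  refine IsCompact.of_isClosed_subset (isCompact_Icc (a := ((0 : ℝ), (0 : ℝ))) (b := (1, (k : ℝ))))
    (isClosed_Tset k) ?_
  rintro ⟨y, x⟩ ⟨⟨hy0, hy1⟩, hx0, hx1⟩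
  simp only [Tset, Set.mem_Icc] at hx1
  have hxk : x ≤ (k : ℝ) := by nlinarith
  simp only [Set.mem_Icc, Prod.mk_le_mk]
  exact ⟨⟨hy0, hx0⟩, hy1, hxk⟩

lemma measurableSet_Tset (k : ℤ) : MeasurableSet (Tset k) :=
  (isClosed_Tset k).measurableSet

lemma deltaK_image (k : ℤ) (hk : 2 ≤ k) : deltaK k = Prod.swap '' Tset k := by
  rw [deltaK_eq k hk]
  ext ⟨x, y⟩
  simp only [Set.mem_setOf_eq, Set.mem_image, Prod.exists, Prod.swap_prod_mk, Tset,
    Set.mem_Icc, Prod.mk.injEq]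
  constructor
  · rintro ⟨h1, h2, h3, h4⟩
    exact ⟨y, x, ⟨⟨h2, h3⟩, ⟨h1, by linarith⟩⟩, rfl, rfl⟩
  · rintro ⟨b, a, ⟨⟨hb0, hb1⟩, ha0, ha1⟩, rfl, rfl⟩
    exact ⟨ha0, hb0, hb1, by linarith⟩

lemma setIntegral_Tset (k : ℤ) (hk : 2 ≤ k) (f : ℝ × ℝ → ℝ) (hf : Continuous f) :
    ∫ p in Tset k, f p =
      ∫ y in (0 : ℝ)..1, ∫ x in (0 : ℝ)..((k : ℝ) - ((k : ℝ) - 1) * y), f (y, x) := by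
  have hTm := measurableSet_Tset k
  have hint : Integrable ((Tset k).indicator f) (volume.prod volume) := by
    rw [← MeasureTheory.Measure.volume_eq_prod]
    exact (MeasureTheory.IntegrableOn.integrable_indicator
      (hf.continuousOn.integrableOn_compact (isCompact_Tset k hk)) hTm)
  have key := MeasureTheory.integral_prod ((Tset k).indicator f) hint
  rw [← MeasureTheory.Measure.volume_eq_prod] at key
  rw [← MeasureTheory.integral_indicator hTm, key]
  have hstep : ∀ a : ℝ, (∫ x : ℝ, (Tset k).indicator f (a, x)) =
      (Set.Icc (0 : ℝ) 1).indicator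
        (fun a => ∫ x in Set.Icc (0 : ℝ) ((k : ℝ) - ((k : ℝ) - 1) * a), f (a, x)) a := by
    intro a
    by_cases ha : a ∈ Set.Icc (0 : ℝ) 1
    · rw [Set.indicator_of_mem ha]
      have : (fun x : ℝ => (Tset k).indicator f (a, x)) =
          (Set.Icc (0 : ℝ) ((k : ℝ) - ((k : ℝ) - 1) * a)).indicator (fun x => f (a, x)) := by
        funext x
        by_cases hx : x ∈ Set.Icc (0 : ℝ) ((k : ℝ) - ((k : ℝ) - 1) * a)
        · rw [Set.indicator_of_mem hx, Set.indicator_of_mem (by exact ⟨ha, hx⟩)]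
        · rw [Set.indicator_of_notMem hx, Set.indicator_of_notMem (by
            rintro ⟨_, h2⟩; exact hx h2)]
      rw [this, MeasureTheory.integral_indicator measurableSet_Icc]
    · rw [Set.indicator_of_notMem ha]
      have : (fun x : ℝ => (Tset k).indicator f (a, x)) = fun _ => 0 := by
        funext x
        exact Set.indicator_of_notMem (by rintro ⟨h1, _⟩; exact ha h1) _
      rw [this, MeasureTheory.integral_zero]
  rw [MeasureTheory.integral_congr_ae (Filter.Eventually.of_forall hstep),
    MeasureTheory.integral_indicator measurableSet_Icc]
  rw [MeasureTheory.integral_Icc_eq_integral_Ioc, ← intervalIntegral.integral_of_le (by norm_num)]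
  refine intervalIntegral.integral_congr fun a ha => ?_
  rw [MeasureTheory.integral_Icc_eq_integral_Ioc, ← intervalIntegral.integral_of_le ?hb]
  have hk' : (2 : ℝ) ≤ (k : ℝ) := by exact_mod_cast hk
  rw [Set.uIcc_of_le (by norm_num)] at ha
  nlinarith [ha.1, ha.2]

lemma int01_poly (a b c : ℝ) :
    ∫ y in (0 : ℝ)..1, (a + b * y + c * y ^ 2) = a + b / 2 + c / 3 := by
  have c1 : Continuous fun y : ℝ => a + b * y := by continuity
  have c2 : Continuous fun y : ℝ => c * y ^ 2 := by continuity
  have i1 : IntervalIntegrable (fun _ : ℝ => a) volume 0 1 := intervalIntegrable_const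
  have i2 : IntervalIntegrable (fun y : ℝ => b * y) volume 0 1 :=
    Continuous.intervalIntegrable (by continuity) 0 1
  rw [intervalIntegral.integral_add (c1.intervalIntegrable 0 1) (c2.intervalIntegrable 0 1),
    intervalIntegral.integral_add i1 i2,
    intervalIntegral.integral_const, intervalIntegral.integral_const_mul,
    intervalIntegral.integral_const_mul, integral_id, integral_pow]
  norm_num
  ring

lemma J0 (k : ℤ) (hk : 2 ≤ k) : ∫ p in Tset k, (1 : ℝ) = ((k : ℝ) + 1) / 2 := by
  rw [setIntegral_Tset k hk _ continuous_const]
  have h : ∀ y : ℝ, (∫ _x in (0 : ℝ)..((k : ℝ) - ((k : ℝ) - 1) * y), (1 : ℝ)) =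
      (k : ℝ) + (-((k : ℝ) - 1)) * y + 0 * y ^ 2 := by
    intro y; rw [intervalIntegral.integral_const]; simp; ring
  simp only [h]
  rw [int01_poly]; ring

lemma J1 (k : ℤ) (hk : 2 ≤ k) : ∫ p in Tset k, p.1 = ((k : ℝ) + 2) / 6 := by
  rw [setIntegral_Tset k hk _ continuous_fst]
  have h : ∀ y : ℝ, (∫ _x in (0 : ℝ)..((k : ℝ) - ((k : ℝ) - 1) * y), y) =
      (0 : ℝ) + (k : ℝ) * y + (-((k : ℝ) - 1)) * y ^ 2 := by
    intro y; rw [intervalIntegral.integral_const]; simp; ring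
  simp only [h]
  rw [int01_poly]; ring

lemma J2 (k : ℤ) (hk : 2 ≤ k) : ∫ p in Tset k, p.2 = ((k : ℝ) ^ 2 + (k : ℝ) + 1) / 6 := by
  rw [setIntegral_Tset k hk _ continuous_snd]
  have h : ∀ y : ℝ, (∫ x in (0 : ℝ)..((k : ℝ) - ((k : ℝ) - 1) * y), x) =
      (k : ℝ) ^ 2 / 2 + (-((k : ℝ) * ((k : ℝ) - 1))) * y + (((k : ℝ) - 1) ^ 2 / 2) * y ^ 2 := by
    intro y; rw [integral_id]; ring
  simp only [h]
  rw [int01_poly]; ring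

lemma swap_measurePreserving : MeasurePreserving (Prod.swap : ℝ × ℝ → ℝ × ℝ) volume volume := by
  rw [MeasureTheory.Measure.volume_eq_prod]
  exact MeasureTheory.Measure.measurePreserving_swap

lemma swap_embedding : MeasurableEmbedding (Prod.swap : ℝ × ℝ → ℝ × ℝ) :=
  (MeasurableEquiv.prodComm : ℝ × ℝ ≃ᵐ ℝ × ℝ).measurableEmbedding

lemma setIntegral_deltaK (k : ℤ) (hk : 2 ≤ k) (f : ℝ × ℝ → ℝ) :
    ∫ p in deltaK k, f p = ∫ p in Tset k, f (p.2, p.1) := by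
  rw [deltaK_image k hk,
    MeasurePreserving.setIntegral_image_emb swap_measurePreserving swap_embedding]
  rfl

lemma isCompact_deltaK (k : ℤ) : IsCompact (deltaK k) := by
  apply Set.Finite.isCompact_convexHull
  exact (Set.finite_singleton _).insert _ |>.insert _ |>.insert _

lemma vol_deltaK (k : ℤ) (hk : 2 ≤ k) : (volume (deltaK k)).toReal = ((k : ℝ) + 1) / 2 := by
  have h1 : ∫ _p in deltaK k, (1 : ℝ) = (volume (deltaK k)).toReal := by
    rw [MeasureTheory.setIntegral_const]; simp; rfl
  have h2 := setIntegral_deltaK k hk (fun _ => (1 : ℝ))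
  rw [h1] at h2
  rw [h2, J0 k hk]

lemma integrableOn_id_deltaK (k : ℤ) : IntegrableOn (fun p : ℝ × ℝ => p) (deltaK k) volume :=
  continuous_id.continuousOn.integrableOn_compact (isCompact_deltaK k)

lemma int_deltaK (k : ℤ) (hk : 2 ≤ k) :
    (∫ p in deltaK k, p) = ((((k : ℝ) ^ 2 + (k : ℝ) + 1) / 6, ((k : ℝ) + 2) / 6) : ℝ × ℝ) := by
  have hInt := integrableOn_id_deltaK k
  have hfst := (ContinuousLinearMap.fst ℝ ℝ ℝ).integral_comp_comm hInt
  have hsnd := (ContinuousLinearMap.snd ℝ ℝ ℝ).integral_comp_comm hInt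
  simp only [ContinuousLinearMap.coe_fst', ContinuousLinearMap.coe_snd'] at hfst hsnd
  refine Prod.ext ?_ ?_
  · rw [← hfst]
    have := setIntegral_deltaK k hk (fun p => p.1)
    simp only at this
    rw [this]
    exact J2 k hk
  · rw [← hsnd]
    have := setIntegral_deltaK k hk (fun p => p.2)
    simp only at this
    rw [this]
    exact J1 k hk

/-! ### Closed forms for the lattice sums -/

lemma hm_nonneg (k : ℤ) (hk : 2 ≤ k) (i : ℕ) {y : ℤ} (hy : y ∈ Finset.Icc (0 : ℤ) (i : ℤ)) :
    0 ≤ (i : ℤ) * k - (k - 1) * y := by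
  rw [Finset.mem_Icc] at hy
  nlinarith [mul_le_mul_of_nonneg_left hy.2 (by omega : (0 : ℤ) ≤ k - 1), hy.1,
    Int.natCast_nonneg i]

lemma card_latF (k : ℤ) (hk : 2 ≤ k) (i : ℕ) :
    ((latF i k).card : ℝ) =
      0 * ((i : ℝ) * ((i : ℝ) + 1) * (2 * (i : ℝ) + 1) / 6) +
        (1 - (k : ℝ)) * ((i : ℝ) * ((i : ℝ) + 1) / 2) +
        ((i : ℝ) * (k : ℝ) + 1) * ((i : ℝ) + 1) := by
  have h0 : ((latF i k).card : ℝ) = ∑ _p ∈ latF i k, (1 : ℝ) := by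
    rw [Finset.sum_const]; simp
  rw [h0, sum_latF]
  have hinner : ∀ y ∈ Finset.Icc (0 : ℤ) (i : ℤ),
      (∑ _x ∈ Finset.Icc (0 : ℤ) ((i : ℤ) * k - (k - 1) * y), (1 : ℝ)) =
      (fun y : ℤ => (((i : ℤ) * k - (k - 1) * y : ℤ) : ℝ) + 1) y := by
    intro y hy
    rw [Finset.sum_const, nsmul_eq_mul, mul_one]
    exact card_Icc_real _ (hm_nonneg k hk i hy)
  rw [Finset.sum_congr rfl hinner, sum_Icc_int _ (Int.natCast_nonneg i) _, Int.toNat_natCast]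
  have hterm : ∀ j ∈ Finset.range (i + 1),
      (fun y : ℤ => (((i : ℤ) * k - (k - 1) * y : ℤ) : ℝ) + 1) (j : ℤ) =
      0 * (j : ℝ) ^ 2 + (1 - (k : ℝ)) * (j : ℝ) + ((i : ℝ) * (k : ℝ) + 1) := by
    intro j _; push_cast; ring
  rw [Finset.sum_congr rfl hterm, sum_quad]

lemma sumx_latF (k : ℤ) (hk : 2 ≤ k) (i : ℕ) :
    (∑ p ∈ latF i k, ((p.1 : ℤ) : ℝ)) =
      (((k : ℝ) - 1) ^ 2 / 2) * ((i : ℝ) * ((i : ℝ) + 1) * (2 * (i : ℝ) + 1) / 6) +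
        ((1 - (k : ℝ)) * (2 * (i : ℝ) * (k : ℝ) + 1) / 2) * ((i : ℝ) * ((i : ℝ) + 1) / 2) +
        ((i : ℝ) * (k : ℝ) * ((i : ℝ) * (k : ℝ) + 1) / 2) * ((i : ℝ) + 1) := by
  rw [sum_latF]
  have hinner : ∀ y ∈ Finset.Icc (0 : ℤ) (i : ℤ),
      (∑ x ∈ Finset.Icc (0 : ℤ) ((i : ℤ) * k - (k - 1) * y), ((x : ℤ) : ℝ)) =
      (fun y : ℤ => (((i : ℤ) * k - (k - 1) * y : ℤ) : ℝ) *
        ((((i : ℤ) * k - (k - 1) * y : ℤ) : ℝ) + 1) / 2) y := by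
    intro y hy
    exact sum_Icc_id_real _ (hm_nonneg k hk i hy)
  rw [Finset.sum_congr rfl hinner, sum_Icc_int _ (Int.natCast_nonneg i) _, Int.toNat_natCast]
  have hterm : ∀ j ∈ Finset.range (i + 1),
      (fun y : ℤ => (((i : ℤ) * k - (k - 1) * y : ℤ) : ℝ) *
        ((((i : ℤ) * k - (k - 1) * y : ℤ) : ℝ) + 1) / 2) (j : ℤ) =
      (((k : ℝ) - 1) ^ 2 / 2) * (j : ℝ) ^ 2 +
        ((1 - (k : ℝ)) * (2 * (i : ℝ) * (k : ℝ) + 1) / 2) * (j : ℝ) +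
        ((i : ℝ) * (k : ℝ) * ((i : ℝ) * (k : ℝ) + 1) / 2) := by
    intro j _; push_cast; ring
  rw [Finset.sum_congr rfl hterm, sum_quad]

lemma sumy_latF (k : ℤ) (hk : 2 ≤ k) (i : ℕ) :
    (∑ p ∈ latF i k, ((p.2 : ℤ) : ℝ)) =
      (1 - (k : ℝ)) * ((i : ℝ) * ((i : ℝ) + 1) * (2 * (i : ℝ) + 1) / 6) +
        ((i : ℝ) * (k : ℝ) + 1) * ((i : ℝ) * ((i : ℝ) + 1) / 2) +
        0 * ((i : ℝ) + 1) := by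
  rw [sum_latF]
  have hinner : ∀ y ∈ Finset.Icc (0 : ℤ) (i : ℤ),
      (∑ _x ∈ Finset.Icc (0 : ℤ) ((i : ℤ) * k - (k - 1) * y), ((y : ℤ) : ℝ)) =
      (fun y : ℤ => ((((i : ℤ) * k - (k - 1) * y : ℤ) : ℝ) + 1) * ((y : ℤ) : ℝ)) y := by
    intro y hy
    rw [Finset.sum_const, nsmul_eq_mul, card_Icc_real _ (hm_nonneg k hk i hy)]
  rw [Finset.sum_congr rfl hinner, sum_Icc_int _ (Int.natCast_nonneg i) _, Int.toNat_natCast]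
  have hterm : ∀ j ∈ Finset.range (i + 1),
      (fun y : ℤ => ((((i : ℤ) * k - (k - 1) * y : ℤ) : ℝ) + 1) * ((y : ℤ) : ℝ)) (j : ℤ) =
      (1 - (k : ℝ)) * (j : ℝ) ^ 2 + ((i : ℝ) * (k : ℝ) + 1) * (j : ℝ) + 0 := by
    intro j _; push_cast; ring
  rw [Finset.sum_congr rfl hterm, sum_quad]

lemma latSum_eq (k : ℤ) (hk : 2 ≤ k) (i : ℕ) (hi : 1 ≤ i) :
    latSum ((i : ℝ) • deltaK k) =
      ((∑ p ∈ latF i k, ((p.1 : ℤ) : ℝ), ∑ p ∈ latF i k, ((p.2 : ℤ) : ℝ)) : ℝ × ℝ) := by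
  rw [latSum, latPts_smul_eq k hk i hi, finsum_mem_coe_finset]
  refine Prod.ext ?_ ?_
  · rw [Prod.fst_sum]
  · rw [Prod.snd_sum]

lemma ncard_eq (k : ℤ) (hk : 2 ≤ k) (i : ℕ) (hi : 1 ≤ i) :
    (latPts ((i : ℝ) • deltaK k)).ncard = (latF i k).card := by
  rw [latPts_smul_eq k hk i hi, Set.ncard_coe_finset]

/-- The Chow-semistability obstruction is nonvanishing for Hirzebruch surfaces. -/
theorem obstruction_deltaK (k : ℤ) (hk : 2 ≤ k) (i : ℕ) (hi : 1 ≤ i) :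
    (volume (deltaK k)).toReal • latSum ((i : ℝ) • deltaK k) -
        ((i : ℝ) * ((latPts ((i : ℝ) • deltaK k)).ncard : ℝ)) • (∫ x in deltaK k, x) =
      (((i : ℝ) * ((i : ℝ) + 1) * (k : ℝ) * ((k : ℝ) - 1)) / 24) •
        (((k : ℝ) - 1, -2) : ℝ × ℝ) ∧
    (volume (deltaK k)).toReal • latSum ((i : ℝ) • deltaK k) -
        ((i : ℝ) * ((latPts ((i : ℝ) • deltaK k)).ncard : ℝ)) • (∫ x in deltaK k, x) ≠ 0 := by
  have hi' : (1 : ℝ) ≤ (i : ℝ) := by exact_mod_cast hi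
  have hk' : (2 : ℝ) ≤ (k : ℝ) := by exact_mod_cast hk
  have hmain :
      (volume (deltaK k)).toReal • latSum ((i : ℝ) • deltaK k) -
        ((i : ℝ) * ((latPts ((i : ℝ) • deltaK k)).ncard : ℝ)) • (∫ x in deltaK k, x) =
      (((i : ℝ) * ((i : ℝ) + 1) * (k : ℝ) * ((k : ℝ) - 1)) / 24) •
        (((k : ℝ) - 1, -2) : ℝ × ℝ) := by
    rw [vol_deltaK k hk, int_deltaK k hk, latSum_eq k hk i hi, ncard_eq k hk i hi,
      card_latF k hk i, sumx_latF k hk i, sumy_latF k hk i]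
    simp only [Prod.smul_mk, Prod.mk_sub_mk, smul_eq_mul, Prod.mk.injEq]
    constructor <;> ring
  refine ⟨hmain, ?_⟩
  rw [hmain]
  intro h
  have h2 := congrArg Prod.snd h
  simp only [Prod.smul_mk, smul_eq_mul, Prod.snd_zero] at h2
  have hp1 : (0 : ℝ) < (i : ℝ) := by linarith
  have hp2 : (0 : ℝ) < (i : ℝ) + 1 := by linarith
  have hp3 : (0 : ℝ) < (k : ℝ) := by linarith
  have hp4 : (0 : ℝ) < (k : ℝ) - 1 := by linarith
  have hc : (0 : ℝ) < ((i : ℝ) * ((i : ℝ) + 1) * (k : ℝ) * ((k : ℝ) - 1)) / 24 :=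
    div_pos (mul_pos (mul_pos (mul_pos hp1 hp2) hp3) hp4) (by norm_num)
  nlinarith [hc]
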